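/- Let σ: 𝒜 → ℬ⁺ be a non-erasing morphism between finite alphabets, let x ∈ 𝒜^ℤ, and let X be the closure of the shift orbit of x in 𝒜^ℤ. Suppose (X,T) is minimal, σ is injective on letters (σ(a) = σ(b) implies a = b), and σ is recognizable in the sense of Mossé for x. Then σ is recognizable in X: each y ∈ ℬ^ℤ has at most one centered σ-representation (k,x') with x' ∈ X. -/

import Mathlib

open scoped BigOperators

namespace Recog

variable {A B C : Type*}

/-- A morphism assigning a word to each letter is non-erasing if every image is nonempty. -/
def NonErasing (σ : A → List B) : Prop := ∀ a, σ a ≠ []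

/-- Apply a morphism letterwise to a finite word, concatenating the images. -/
def wordApply (σ : A → List B) : List A → List B
  | [] => []
  | a :: w => σ a ++ wordApply σ w

/-- Composition of morphisms `τ ∘ σ`. -/
def comp (τ : B → List C) (σ : A → List B) : A → List C := fun a => wordApply τ (σ a)

/-- The `ℓ`-th cutting point of the representation `(0, x)`:
`|σ(x_[0,ℓ))|` for `ℓ ≥ 0` and `-|σ(x_[ℓ,0))|` for `ℓ < 0`. -/
def cut (σ : A → List B) (x : ℤ → A) (ℓ : ℤ) : ℤ :=
  if 0 ≤ ℓ then ∑ i ∈ Finset.range ℓ.toNat, ((σ (x i)).length : ℤ)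
  else -∑ i ∈ Finset.range (-ℓ).toNat, ((σ (x (-(i : ℤ) - 1))).length : ℤ)

/-- `y` is the bi-infinite image `σ(x)`, where `σ(x₀)` starts at position `0`. -/
def IsSubstPt (σ : A → List B) (x : ℤ → A) (y : ℤ → B) : Prop :=
  ∀ (ℓ : ℤ) (j : ℕ) (hj : j < (σ (x ℓ)).length),
    y (cut σ x ℓ + j) = (σ (x ℓ)).get ⟨j, hj⟩

/-- `(k, x)` is a `σ`-representation of `y`, i.e. `y = T^k σ(x)`. -/
def IsRep (σ : A → List B) (y : ℤ → B) (k : ℤ) (x : ℤ → A) : Prop :=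
  IsSubstPt σ x fun n => y (n - k)

/-- `(k, x)` is a centered `σ`-representation of `y`: `y = T^k σ(x)` with `0 ≤ k < |σ(x₀)|`. -/
def IsCenteredRep (σ : A → List B) (y : ℤ → B) (k : ℤ) (x : ℤ → A) : Prop :=
  IsRep σ y k x ∧ 0 ≤ k ∧ k < ((σ (x 0)).length : ℤ)

/-- `y` is aperiodic: `T^p y ≠ y` for all `p ≥ 1`. -/
def Aperiodic (y : ℤ → B) : Prop := ∀ p : ℕ, 1 ≤ p → (fun n => y (n + p)) ≠ y

/-- `y` is periodic: `T^p y = y` for some `p ≥ 1`. -/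
def Periodic (y : ℤ → B) : Prop := ∃ p : ℕ, 1 ≤ p ∧ (fun n => y (n + p)) = y

/-- The set of `σ`-cutting points of the representation `(k, x)`. -/
def cutSet (σ : A → List B) (x : ℤ → A) (k : ℤ) : Set ℤ :=
  {m : ℤ | ∃ ℓ : ℤ, m = cut σ x ℓ - k}

/-- `σ` is recognizable in `X`: every `y` has at most one centered `σ`-representation in `X`. -/
def RecIn (σ : A → List B) (X : Set (ℤ → A)) : Prop :=
  ∀ (y : ℤ → B) (k k' : ℤ) (x x' : ℤ → A), x ∈ X → x' ∈ X →
    IsCenteredRep σ y k x → IsCenteredRep σ y k' x' → k = k' ∧ x = x'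

/-- `σ` is recognizable in `X` for aperiodic points. -/
def RecInAp (σ : A → List B) (X : Set (ℤ → A)) : Prop :=
  ∀ y : ℤ → B, Aperiodic y → ∀ (k k' : ℤ) (x x' : ℤ → A), x ∈ X → x' ∈ X →
    IsCenteredRep σ y k x → IsCenteredRep σ y k' x' → k = k' ∧ x = x'

/-- `σ` is left permutative: the first letters of `σ a` and `σ b` differ for distinct `a, b`. -/
def LeftPermutative (σ : A → List B) : Prop :=
  ∀ a b : A, a ≠ b → (σ a).head? ≠ (σ b).head?

/-- `σ` is right permutative: the last letters of `σ a` and `σ b` differ for distinct `a, b`. -/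
def RightPermutative (σ : A → List B) : Prop :=
  ∀ a b : A, a ≠ b → (σ a).getLast? ≠ (σ b).getLast?

/-- `σ` and `σ'` are rotationally conjugate. -/
def RotConj (σ σ' : A → List B) : Prop :=
  ∃ w : List B, (∀ a, σ a ++ w = w ++ σ' a) ∨ (∀ a, w ++ σ a = σ' a ++ w)

/-- The incidence matrix of `σ`, over `ℚ`: entry `(b, a)` counts occurrences of `b` in `σ a`. -/
noncomputable def incidence (σ : A → List B) [DecidableEq B] : Matrix B A ℚ :=
  Matrix.of fun b a => ((σ a).count b : ℚ)

/-- The finite subword `x_[i, i+m)` of a bi-infinite sequence. -/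
def factor (x : ℤ → A) (i : ℤ) (m : ℕ) : List A := (List.range m).map fun j => x (i + j)

/-- The language of a bi-infinite sequence: the set of its finite subwords. -/
def lang (x : ℤ → A) : Set (List A) := {w | ∃ (i : ℤ) (m : ℕ), w = factor x i m}

/-- `σ` is injective on bi-infinite sequences. -/
def InjZ (σ : A → List B) : Prop :=
  ∀ (x x' : ℤ → A) (y : ℤ → B), IsSubstPt σ x y → IsSubstPt σ x' y → x = x'

/-- Cutting points for one-sided sequences. -/
def cutN (σ : A → List B) (x : ℕ → A) (ℓ : ℕ) : ℕ :=
  ∑ i ∈ Finset.range ℓ, (σ (x i)).length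

/-- `y` is the one-sided image `σ(x)` for `x : ℕ → A`. -/
def IsSubstPtN (σ : A → List B) (x : ℕ → A) (y : ℕ → B) : Prop :=
  ∀ (ℓ j : ℕ) (hj : j < (σ (x ℓ)).length),
    y (cutN σ x ℓ + j) = (σ (x ℓ)).get ⟨j, hj⟩

/-- `σ` is injective on one-sided (right-infinite) sequences. -/
def InjN (σ : A → List B) : Prop :=
  ∀ (x x' : ℕ → A) (y : ℕ → B), IsSubstPtN σ x y → IsSubstPtN σ x' y → x = x'

/-- The total length `⦀σ⦀ = Σ_a |σ a|`. -/
def totalLen (σ : A → List B) [Fintype A] : ℕ := ∑ a, (σ a).length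

/-- `X` is invariant under the two-sided shift. -/
def ShiftInvariant (X : Set (ℤ → A)) : Prop :=
  ∀ x ∈ X, (fun n => x (n + 1)) ∈ X ∧ (fun n => x (n - 1)) ∈ X

/-- The iterate `σ^n` of a substitution, applied to a letter. -/
def iter (σ : A → List A) : ℕ → A → List A
  | 0, a => [a]
  | n + 1, a => wordApply (iter σ n) (σ a)

/-- The language `ℒ_σ` of a substitution: subwords of the `σ^n(a)`. -/
def subLang (σ : A → List A) : Set (List A) := {w | ∃ (n : ℕ) (a : A), w <:+: iter σ n a}

/-- The substitutive shift `X_σ`. -/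
def subX (σ : A → List A) : Set (ℤ → A) := {x | ∀ w ∈ lang x, w ∈ subLang σ}

/-- `σ` is recognizable in the sense of Mossé for `x`. -/
def MosseRec (σ : A → List B) (x : ℤ → A) : Prop :=
  ∃ ℓ : ℕ, ∀ y : ℤ → B, IsSubstPt σ x y →
    ∀ m ∈ cutSet σ x 0, ∀ m' : ℤ,
      factor y (m - ℓ) (2 * ℓ) = factor y (m' - ℓ) (2 * ℓ) → m' ∈ cutSet σ x 0

section Sadic

variable {𝒜 : ℕ → Type*}

/-- `block σ N = σ_[0,N)`, mapping a letter of `𝒜 N` to a word over `𝒜 0`. -/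
def block (σ : ∀ n, 𝒜 (n + 1) → List (𝒜 n)) : ∀ N, 𝒜 N → List (𝒜 0)
  | 0, a => [a]
  | N + 1, a => wordApply (block σ N) (σ N a)

/-- `blockFrom σ n k = σ_[n,n+k)`, mapping a letter of `𝒜 (n+k)` to a word over `𝒜 n`. -/
def blockFrom (σ : ∀ n, 𝒜 (n + 1) → List (𝒜 n)) (n k : ℕ) : 𝒜 (n + k) → List (𝒜 n) :=
  block (𝒜 := fun m => 𝒜 (n + m)) (fun m => σ (n + m)) k

/-- The language `ℒ^(n)_σ` of a directive sequence. -/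
def sadicLang (σ : ∀ n, 𝒜 (n + 1) → List (𝒜 n)) (n : ℕ) : Set (List (𝒜 n)) :=
  {w | ∃ (k : ℕ) (a : 𝒜 (n + k)), 1 ≤ k ∧ w <:+: blockFrom σ n k a}

/-- The shift `X^(n)_σ` of a directive sequence. -/
def sadicX (σ : ∀ n, 𝒜 (n + 1) → List (𝒜 n)) (n : ℕ) : Set (ℤ → 𝒜 n) :=
  {x | ∀ w ∈ lang x, w ∈ sadicLang σ n}

/-- A directive sequence is everywhere growing if `min_a |σ_[0,n)(a)| → ∞`. -/
def EverywhereGrowing (σ : ∀ n, 𝒜 (n + 1) → List (𝒜 n)) : Prop :=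
  ∀ m : ℕ, ∃ N : ℕ, ∀ n ≥ N, ∀ a : 𝒜 n, m ≤ (block σ n a).length

end Sadic

end Recog
namespace Recog

variable {A B : Type*}

section CutLemmas

variable (σ : A → List B) (z : ℤ → A)

lemma cut_ofNat (n : ℕ) : cut σ z n = ∑ i ∈ Finset.range n, ((σ (z i)).length : ℤ) := by
  simp [cut]

lemma cut_neg (n : ℕ) :
    cut σ z (-(n : ℤ)) = -∑ i ∈ Finset.range n, ((σ (z (-(i : ℤ) - 1))).length : ℤ) := by
  rcases Nat.eq_zero_or_pos n with h | h
  · subst h; simp [cut]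
  · rw [cut, if_neg (by omega)]
    congr 1
    simp

lemma cut_zero : cut σ z 0 = 0 := by simp [cut]

lemma cut_succ (ℓ : ℤ) : cut σ z (ℓ + 1) = cut σ z ℓ + ((σ (z ℓ)).length : ℤ) := by
  rcases le_or_gt 0 ℓ with h | h
  · obtain ⟨n, rfl⟩ := Int.eq_ofNat_of_zero_le h
    rw [show ((n : ℤ) + 1) = ((n + 1 : ℕ) : ℤ) by push_cast; ring]
    rw [cut_ofNat, cut_ofNat, Finset.sum_range_succ]
  · obtain ⟨n, rfl⟩ : ∃ n : ℕ, ℓ = -(n + 1 : ℕ) := by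
      refine ⟨(-ℓ - 1).toNat, ?_⟩; omega
    rw [show (-(n + 1 : ℕ) : ℤ) + 1 = -(n : ℤ) by push_cast; ring]
    rw [cut_neg σ z n, cut_neg σ z (n+1), Finset.sum_range_succ]
    rw [show (-((n:ℤ)) - 1) = (-(((n+1:ℕ)) : ℤ)) by push_cast; ring]
    ring

lemma one_le_len (hσ : NonErasing σ) (a : A) : 1 ≤ ((σ a).length : ℤ) := by
  have := hσ a
  have : 0 < (σ a).length := List.length_pos_iff.mpr this
  exact_mod_cast this

lemma cut_strictMono (hσ : NonErasing σ) : StrictMono (cut σ z) := by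
  apply strictMono_int_of_lt_succ
  intro ℓ
  rw [cut_succ]
  have := one_le_len σ hσ (z ℓ)
  omega

lemma le_cut (hσ : NonErasing σ) {ℓ : ℤ} (h : 0 ≤ ℓ) : ℓ ≤ cut σ z ℓ := by
  obtain ⟨n, rfl⟩ := Int.eq_ofNat_of_zero_le h
  induction n with
  | zero => simp [cut_zero]
  | succ n ih =>
    rw [show ((n+1 : ℕ) : ℤ) = (n : ℤ) + 1 by push_cast; ring, cut_succ]
    have := one_le_len σ hσ (z n)
    omega

lemma cut_le (hσ : NonErasing σ) {ℓ : ℤ} (h : ℓ ≤ 0) : cut σ z ℓ ≤ ℓ := by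
  obtain ⟨n, rfl⟩ := Int.exists_eq_neg_ofNat h
  induction n with
  | zero => simp [cut_zero]
  | succ n ih =>
    have h1 := cut_succ σ z (-((n+1 : ℕ) : ℤ))
    rw [show (-((n+1:ℕ):ℤ) + 1) = -((n:ℕ):ℤ) by push_cast; ring] at h1
    have := one_le_len σ hσ (z (-((n+1:ℕ):ℤ)))
    omega

lemma exists_floor (hσ : NonErasing σ) (p : ℤ) : ∃ ℓ : ℤ, cut σ z ℓ ≤ p ∧ p < cut σ z (ℓ + 1) := by
  have hbdd : ∃ b : ℤ, ∀ ℓ : ℤ, cut σ z ℓ ≤ p → ℓ ≤ b := by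
    refine ⟨max p 0, fun ℓ hℓ => ?_⟩
    rcases le_or_gt 0 ℓ with h | h
    · have := le_cut σ z hσ h; omega
    · omega
  have hinh : ∃ ℓ : ℤ, cut σ z ℓ ≤ p := by
    refine ⟨min p 0, ?_⟩
    have := cut_le σ z hσ (min_le_right p 0)
    omega
  obtain ⟨ℓ, h1, h2⟩ := Int.exists_greatest_of_bdd hbdd hinh
  refine ⟨ℓ, h1, ?_⟩
  by_contra h
  have := h2 (ℓ + 1) (by omega)
  omega

lemma floor_unique (hσ : NonErasing σ) {p ℓ ℓ' : ℤ} (h1 : cut σ z ℓ ≤ p) (h2 : p < cut σ z (ℓ + 1))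
    (h3 : cut σ z ℓ' ≤ p) (h4 : p < cut σ z (ℓ' + 1)) : ℓ = ℓ' := by
  by_contra h
  rcases lt_or_gt_of_ne h with hlt | hlt
  · have : cut σ z (ℓ + 1) ≤ cut σ z ℓ' := (cut_strictMono σ z hσ).le_iff_le.mpr (by omega)
    omega
  · have : cut σ z (ℓ' + 1) ≤ cut σ z ℓ := (cut_strictMono σ z hσ).le_iff_le.mpr (by omega)
    omega

end CutLemmas

end Recog
namespace Recog

variable {A B : Type*}

lemma substPt_eval_eq (σ : A → List B) (hσ : NonErasing σ) (x z : ℤ → A)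
    (yz y0 : ℤ → B) (hyz : IsSubstPt σ z yz) (hy0 : IsSubstPt σ x y0)
    {p p' ℓ ℓ' : ℤ} (h1 : cut σ z ℓ ≤ p) (h2 : p < cut σ z (ℓ + 1))
    (h3 : cut σ x ℓ' ≤ p') (h4 : p' < cut σ x (ℓ' + 1))
    (hlet : z ℓ = x ℓ') (hoff : p - cut σ z ℓ = p' - cut σ x ℓ') :
    yz p = y0 p' := by
  have hcz := cut_succ σ z ℓ
  have hcx := cut_succ σ x ℓ'
  set j : ℕ := (p - cut σ z ℓ).toNat with hjdef
  have hj : j < (σ (z ℓ)).length := by omega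
  have hj' : j < (σ (x ℓ')).length := by omega
  have e1 : p = cut σ z ℓ + (j : ℤ) := by omega
  have e2 : p' = cut σ x ℓ' + (j : ℤ) := by omega
  rw [e1, e2, hyz ℓ j hj, hy0 ℓ' j hj']
  simp only [List.get_eq_getElem]
  congr 1
  rw [hlet]

lemma exists_substPt (σ : A → List B) (hσ : NonErasing σ) (x : ℤ → A) :
    ∃ y0 : ℤ → B, IsSubstPt σ x y0 := by
  choose f h1 h2 using exists_floor σ x hσ
  have hB : ∀ p, (p - cut σ x (f p)).toNat < (σ (x (f p))).length := by
    intro p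
    have hc := cut_succ σ x (f p)
    have := h1 p; have := h2 p
    omega
  refine ⟨fun p => (σ (x (f p))).get ⟨(p - cut σ x (f p)).toNat, hB p⟩, ?_⟩
  intro ℓ j hj
  set p := cut σ x ℓ + (j : ℤ) with hp
  have hc := cut_succ σ x ℓ
  have hfp : f p = ℓ :=
    floor_unique σ x hσ (h1 p) (h2 p) (by omega) (by omega)
  simp only [List.get_eq_getElem]
  have hidx : ∀ (ℓ₀ : ℤ) (hℓ₀ : ℓ₀ = ℓ) (hb : (p - cut σ x ℓ₀).toNat < (σ (x ℓ₀)).length),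
      (σ (x ℓ₀))[(p - cut σ x ℓ₀).toNat] = (σ (x ℓ))[j] := by
    intro ℓ₀ hℓ₀ hb
    subst hℓ₀
    congr 1
    omega
  exact hidx (f p) hfp (hB p)

lemma cut_add (σ : A → List B) (z : ℤ → A) (a : ℤ) (t : ℕ) :
    cut σ z (a + t) = cut σ z a + ∑ j ∈ Finset.range t, ((σ (z (a + j))).length : ℤ) := by
  induction t with
  | zero => simp
  | succ t ih =>
    rw [show a + ((t + 1 : ℕ) : ℤ) = (a + t) + 1 by push_cast; ring, cut_succ, ih,
      Finset.sum_range_succ]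
    ring

lemma cut_transfer (σ : A → List B) (x z : ℤ → A) {a i : ℤ} {n : ℕ}
    (hocc : ∀ t : ℕ, t < n → z (a + t) = x (i + t)) :
    ∀ t : ℕ, t ≤ n → cut σ z (a + t) - cut σ z a = cut σ x (i + t) - cut σ x i := by
  intro t ht
  rw [cut_add, cut_add]
  have hcongr : ∀ j ∈ Finset.range t, ((σ (z (a + j))).length : ℤ) = ((σ (x (i + j))).length : ℤ) := by
    intro j hj
    rw [hocc j (by simp only [Finset.mem_range] at hj; omega)]
  rw [Finset.sum_congr rfl hcongr]
  ring

lemma val_transfer (σ : A → List B) (hσ : NonErasing σ) (x z : ℤ → A)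
    (yz y0 : ℤ → B) (hyz : IsSubstPt σ z yz) (hy0 : IsSubstPt σ x y0)
    {a i : ℤ} {n : ℕ} (hocc : ∀ t : ℕ, t < n → z (a + t) = x (i + t)) :
    ∀ s : ℤ, 0 ≤ s → cut σ z a + s < cut σ z (a + n) →
      yz (cut σ z a + s) = y0 (cut σ x i + s) := by
  intro s hs hlt
  obtain ⟨ℓ, hl1, hl2⟩ := exists_floor σ z hσ (cut σ z a + s)
  have haℓ : a ≤ ℓ := by
    by_contra h
    have : cut σ z (ℓ + 1) ≤ cut σ z a := (cut_strictMono σ z hσ).le_iff_le.mpr (by omega)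
    omega
  have hℓn : ℓ < a + n := by
    by_contra h
    have : cut σ z (a + (n : ℤ)) ≤ cut σ z ℓ := (cut_strictMono σ z hσ).le_iff_le.mpr (by omega)
    omega
  set t : ℕ := (ℓ - a).toNat with htdef
  have hta : a + (t : ℤ) = ℓ := by omega
  have htn : t < n := by omega
  have e1 := cut_transfer σ x z hocc t (le_of_lt htn)
  have e2 := cut_transfer σ x z hocc (t + 1) (by omega)
  rw [hta] at e1
  rw [show a + ((t + 1 : ℕ) : ℤ) = ℓ + 1 by push_cast; omega,
    show i + ((t + 1 : ℕ) : ℤ) = (i + (t : ℤ)) + 1 by push_cast; ring] at e2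
  have hlet : z ℓ = x (i + (t : ℤ)) := by rw [← hta]; exact hocc t htn
  exact substPt_eval_eq σ hσ x z yz y0 hyz hy0 hl1 hl2 (by omega) (by omega) hlet (by omega)

lemma occ_of_mem_closure [TopologicalSpace A] [DiscreteTopology A] (x : ℤ → A) {z : ℤ → A}
    (hz : z ∈ closure {w : ℤ → A | ∃ n : ℤ, w = fun i => x (i + n)}) (a : ℤ) (n : ℕ) :
    ∃ i : ℤ, ∀ t : ℕ, t < n → z (a + t) = x (i + t) := by
  have hU : IsOpen {w : ℤ → A | ∀ t ∈ Finset.range n, w (a + t) = z (a + t)} := by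
    have hrw : {w : ℤ → A | ∀ t ∈ Finset.range n, w (a + t) = z (a + t)} =
        ⋂ t ∈ Finset.range n, (fun w : ℤ → A => w (a + (t : ℤ))) ⁻¹' {z (a + (t : ℤ))} := by
      ext w
      simp
    rw [hrw]
    exact isOpen_biInter_finset fun t _ =>
      (continuous_apply (a + (t : ℤ))).isOpen_preimage _ (isOpen_discrete _)
  obtain ⟨w, hw1, hw2⟩ := mem_closure_iff.mp hz _ hU (fun t _ => rfl)
  obtain ⟨n0, rfl⟩ := hw2
  refine ⟨a + n0, fun t ht => ?_⟩
  have h := hw1 t (Finset.mem_range.mpr ht)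
  rw [← h]
  ring_nf

end Recog
namespace Recog

variable {A B : Type*}

lemma range_cast (m : ℕ) :
    (do let a ← List.range m; pure (↑a : ℤ)) = List.map (fun a : ℕ => (a : ℤ)) (List.range m) := by
  exact (List.map_eq_flatMap).symm

lemma factor_length (y : ℤ → B) (i : ℤ) (m : ℕ) : (factor y i m).length = m := by
  unfold factor
  rw [range_cast]
  simp only [List.length_map, List.length_range]

lemma factor_getElem (y : ℤ → B) (i : ℤ) (m : ℕ) (n : ℕ) (h : n < m) :
    (factor y i m)[n]'(by rw [factor_length]; exact h) = y (i + n) := by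
  unfold factor
  simp only [range_cast, List.getElem_map, List.getElem_range]

lemma factor_eq_of_pointwise (y y' : ℤ → B) (i i' : ℤ) (m : ℕ)
    (h : ∀ j : ℕ, j < m → y (i + j) = y' (i' + j)) :
    factor y i m = factor y' i' m := by
  apply List.ext_getElem
  · rw [factor_length, factor_length]
  · intro n h1 h2
    have hn : n < m := by rw [factor_length] at h1; exact h1
    rw [factor_getElem y i m n hn, factor_getElem y' i' m n hn]
    exact h n hn

lemma main_step [TopologicalSpace A] [DiscreteTopology A]
    (σ : A → List B) (hσ : NonErasing σ) (x : ℤ → A)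
    (y0 : ℤ → B) (hy0 : IsSubstPt σ x y0) (R : ℕ)
    (hR : ∀ m ∈ cutSet σ x 0, ∀ m' : ℤ,
      factor y0 (m - R) (2 * R) = factor y0 (m' - R) (2 * R) → m' ∈ cutSet σ x 0)
    (z1 z2 : ℤ → A)
    (hz1 : z1 ∈ closure {w : ℤ → A | ∃ n : ℤ, w = fun i => x (i + n)})
    (hz2 : z2 ∈ closure {w : ℤ → A | ∃ n : ℤ, w = fun i => x (i + n)})
    (y : ℤ → B) (k1 k2 : ℤ)
    (hy1 : IsSubstPt σ z1 (fun n => y (n - k1)))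
    (hy2 : IsSubstPt σ z2 (fun n => y (n - k2)))
    (ℓ1 : ℤ) : ∃ ℓ2 : ℤ, cut σ z1 ℓ1 - k1 = cut σ z2 ℓ2 - k2 := by
  set Rz : ℤ := (R : ℤ) with hRz
  set m : ℤ := cut σ z1 ℓ1 - k1 with hm
  have hmono1 := cut_strictMono σ z1 hσ
  have hmono2 := cut_strictMono σ z2 hσ
  have hmonox := cut_strictMono σ x hσ
  -- window 1
  set a1 : ℤ := min (m + k1 - Rz - 1) 0 with ha1def
  set b1 : ℤ := max (m + k1 + Rz + 1) 0 with hb1def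
  have ha1 : cut σ z1 a1 ≤ m + k1 - Rz - 1 :=
    le_trans (cut_le σ z1 hσ (min_le_right _ _)) (min_le_left _ _)
  have hb1 : m + k1 + Rz + 1 ≤ cut σ z1 b1 :=
    le_trans (le_max_left _ _) (le_cut σ z1 hσ (le_max_right _ _))
  have hab1 : a1 ≤ b1 := le_trans (min_le_right _ _) (le_max_right _ _)
  set n1 : ℕ := (b1 - a1).toNat with hn1def
  have hn1 : a1 + (n1 : ℤ) = b1 := by omega
  obtain ⟨i1, hocc1⟩ := occ_of_mem_closure x hz1 a1 n1
  have hmk1 : cut σ z1 ℓ1 = m + k1 := by omega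
  have hR0 : (0 : ℤ) ≤ Rz := by positivity
  have hℓ1a : a1 ≤ ℓ1 := le_of_lt (hmono1.lt_iff_lt.mp (by omega))
  have hℓ1b : ℓ1 ≤ b1 := le_of_lt (hmono1.lt_iff_lt.mp (by omega))
  set t1 : ℕ := (ℓ1 - a1).toNat with ht1def
  have ht1 : a1 + (t1 : ℤ) = ℓ1 := by omega
  have et1 := cut_transfer σ x z1 hocc1 t1 (by omega)
  rw [ht1] at et1
  set p1 : ℤ := cut σ x i1 + (m + k1 - cut σ z1 a1) with hp1def
  have hp1 : p1 = cut σ x (i1 + (t1 : ℤ)) := by omega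
  have hp1cut : p1 ∈ cutSet σ x 0 := ⟨i1 + (t1 : ℤ), by omega⟩
  have V1 : ∀ j : ℕ, j < 2 * R → y0 (p1 - Rz + j) = y (m - Rz + j) := by
    intro j hj
    have hjz : (j : ℤ) < 2 * Rz := by push_cast [hRz]; exact_mod_cast hj
    set s : ℤ := (m + k1 - Rz + j) - cut σ z1 a1 with hsdef
    have hs : 0 ≤ s := by omega
    have hlt : cut σ z1 a1 + s < cut σ z1 (a1 + (n1 : ℤ)) := by
      rw [hn1]; omega
    have hv := val_transfer σ hσ x z1 _ y0 hy1 hy0 hocc1 s hs hlt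
    have h1 : cut σ z1 a1 + s = m + k1 - Rz + (j : ℤ) := by omega
    have h2 : cut σ x i1 + s = p1 - Rz + (j : ℤ) := by omega
    rw [h1, h2] at hv
    rw [← hv]
    congr 1
    omega
  -- window 2
  set a2 : ℤ := min (m + k2 - Rz - 1) 0 with ha2def
  set b2 : ℤ := max (m + k2 + Rz + 1) 0 with hb2def
  have ha2 : cut σ z2 a2 ≤ m + k2 - Rz - 1 :=
    le_trans (cut_le σ z2 hσ (min_le_right _ _)) (min_le_left _ _)
  have hb2 : m + k2 + Rz + 1 ≤ cut σ z2 b2 :=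
    le_trans (le_max_left _ _) (le_cut σ z2 hσ (le_max_right _ _))
  have hab2 : a2 ≤ b2 := le_trans (min_le_right _ _) (le_max_right _ _)
  set n2 : ℕ := (b2 - a2).toNat with hn2def
  have hn2 : a2 + (n2 : ℤ) = b2 := by omega
  obtain ⟨i2, hocc2⟩ := occ_of_mem_closure x hz2 a2 n2
  set q0 : ℤ := cut σ x i2 + (m + k2 - cut σ z2 a2) with hq0def
  have V2 : ∀ j : ℕ, j < 2 * R → y0 (q0 - Rz + j) = y (m - Rz + j) := by
    intro j hj
    have hjz : (j : ℤ) < 2 * Rz := by push_cast [hRz]; exact_mod_cast hj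
    set s : ℤ := (m + k2 - Rz + j) - cut σ z2 a2 with hsdef
    have hs : 0 ≤ s := by omega
    have hlt : cut σ z2 a2 + s < cut σ z2 (a2 + (n2 : ℤ)) := by
      rw [hn2]; omega
    have hv := val_transfer σ hσ x z2 _ y0 hy2 hy0 hocc2 s hs hlt
    have h1 : cut σ z2 a2 + s = m + k2 - Rz + (j : ℤ) := by omega
    have h2 : cut σ x i2 + s = q0 - Rz + (j : ℤ) := by omega
    rw [h1, h2] at hv
    rw [← hv]
    congr 1
    omega
  -- Mossé
  have hfac : factor y0 (p1 - Rz) (2 * R) = factor y0 (q0 - Rz) (2 * R) :=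
    factor_eq_of_pointwise _ _ _ _ _ fun j hj => (V1 j hj).trans (V2 j hj).symm
  obtain ⟨ℓ', hℓ'⟩ := hR p1 hp1cut q0 hfac
  rw [sub_zero] at hℓ'
  -- locate ℓ'
  have en2 := cut_transfer σ x z2 hocc2 n2 (le_refl n2)
  rw [hn2] at en2
  have hq1 : cut σ x i2 ≤ q0 := by omega
  have hq2 : q0 < cut σ x (i2 + (n2 : ℤ)) := by omega
  have hi2ℓ' : i2 ≤ ℓ' := by
    by_contra h
    have : cut σ x ℓ' < cut σ x i2 := hmonox.lt_iff_lt.mpr (by omega)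
    omega
  have hℓ'n2 : ℓ' < i2 + (n2 : ℤ) := by
    by_contra h
    have : cut σ x (i2 + (n2 : ℤ)) ≤ cut σ x ℓ' := hmonox.le_iff_le.mpr (by omega)
    omega
  set t' : ℕ := (ℓ' - i2).toNat with ht'def
  have ht' : i2 + (t' : ℤ) = ℓ' := by omega
  have et' := cut_transfer σ x z2 hocc2 t' (by omega)
  rw [ht'] at et'
  exact ⟨a2 + (t' : ℤ), by omega⟩

lemma sync (σ : A → List B) (hσ : NonErasing σ) (z1 z2 : ℤ → A) (k1 k2 : ℤ)
    (h12 : ∀ ℓ1 : ℤ, ∃ ℓ2 : ℤ, cut σ z1 ℓ1 - k1 = cut σ z2 ℓ2 - k2)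
    (h21 : ∀ ℓ2 : ℤ, ∃ ℓ1 : ℤ, cut σ z2 ℓ2 - k2 = cut σ z1 ℓ1 - k1)
    (hk1 : 0 ≤ k1) (hk1' : k1 < ((σ (z1 0)).length : ℤ))
    (hk2 : 0 ≤ k2) (hk2' : k2 < ((σ (z2 0)).length : ℤ)) :
    ∀ ℓ : ℤ, cut σ z1 ℓ - k1 = cut σ z2 ℓ - k2 := by
  have hmono1 := cut_strictMono σ z1 hσ
  have hmono2 := cut_strictMono σ z2 hσ
  have hc10 : cut σ z1 0 = 0 := cut_zero σ z1
  have hc20 : cut σ z2 0 = 0 := cut_zero σ z2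
  have hc11 : cut σ z1 1 = ((σ (z1 0)).length : ℤ) := by
    have := cut_succ σ z1 0
    rw [hc10, show (0:ℤ) + 1 = 1 from by norm_num] at this
    omega
  have hc21 : cut σ z2 1 = ((σ (z2 0)).length : ℤ) := by
    have := cut_succ σ z2 0
    rw [hc20, show (0:ℤ) + 1 = 1 from by norm_num] at this
    omega
  have base : cut σ z1 0 - k1 = cut σ z2 0 - k2 := by
    obtain ⟨s, hs⟩ := h12 0
    obtain ⟨s', hs'⟩ := h21 0
    have h1 : cut σ z1 0 - k1 ≤ cut σ z2 0 - k2 := by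
      rcases le_or_gt s 0 with h | h
      · have : cut σ z2 s ≤ cut σ z2 0 := hmono2.le_iff_le.mpr h
        omega
      · have : cut σ z2 1 ≤ cut σ z2 s := hmono2.le_iff_le.mpr h
        omega
    have h2 : cut σ z2 0 - k2 ≤ cut σ z1 0 - k1 := by
      rcases le_or_gt s' 0 with h | h
      · have : cut σ z1 s' ≤ cut σ z1 0 := hmono1.le_iff_le.mpr h
        omega
      · have : cut σ z1 1 ≤ cut σ z1 s' := hmono1.le_iff_le.mpr h
        omega
    omega
  have hup : ∀ ℓ : ℤ, cut σ z1 ℓ - k1 = cut σ z2 ℓ - k2 →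
      cut σ z1 (ℓ + 1) - k1 = cut σ z2 (ℓ + 1) - k2 := by
    intro ℓ hℓ
    obtain ⟨s, hs⟩ := h12 (ℓ + 1)
    obtain ⟨s', hs'⟩ := h21 (ℓ + 1)
    have hc1 : cut σ z1 ℓ < cut σ z1 (ℓ + 1) := hmono1 (by omega)
    have hc2 : cut σ z2 ℓ < cut σ z2 (ℓ + 1) := hmono2 (by omega)
    have h1 : cut σ z2 (ℓ + 1) ≤ cut σ z2 s := by
      apply hmono2.le_iff_le.mpr
      by_contra h
      have : cut σ z2 s ≤ cut σ z2 ℓ := hmono2.le_iff_le.mpr (by omega)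
      omega
    have h2 : cut σ z1 (ℓ + 1) ≤ cut σ z1 s' := by
      apply hmono1.le_iff_le.mpr
      by_contra h
      have : cut σ z1 s' ≤ cut σ z1 ℓ := hmono1.le_iff_le.mpr (by omega)
      omega
    omega
  have hdown : ∀ ℓ : ℤ, cut σ z1 ℓ - k1 = cut σ z2 ℓ - k2 →
      cut σ z1 (ℓ - 1) - k1 = cut σ z2 (ℓ - 1) - k2 := by
    intro ℓ hℓ
    obtain ⟨s, hs⟩ := h12 (ℓ - 1)
    obtain ⟨s', hs'⟩ := h21 (ℓ - 1)
    have hc1 : cut σ z1 (ℓ - 1) < cut σ z1 ℓ := hmono1 (by omega)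
    have hc2 : cut σ z2 (ℓ - 1) < cut σ z2 ℓ := hmono2 (by omega)
    have h1 : cut σ z2 s ≤ cut σ z2 (ℓ - 1) := by
      apply hmono2.le_iff_le.mpr
      by_contra h
      have : cut σ z2 ℓ ≤ cut σ z2 s := hmono2.le_iff_le.mpr (by omega)
      omega
    have h2 : cut σ z1 s' ≤ cut σ z1 (ℓ - 1) := by
      apply hmono1.le_iff_le.mpr
      by_contra h
      have : cut σ z1 ℓ ≤ cut σ z1 s' := hmono1.le_iff_le.mpr (by omega)
      omega
    omega
  intro ℓ
  induction ℓ using Int.induction_on with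
  | zero => exact base
  | succ i ih => exact hup i ih
  | pred i ih => exact hdown (-(i : ℤ)) ih

end Recog

open Recog in
/-- If the orbit closure `X` of `x` is minimal, `σ` is injective on letters,
and `σ` is recognizable in the sense of Mossé for `x`, then `σ` is recognizable in `X`. -/
theorem stmt6 {A B : Type*} [Fintype A] [Fintype B]
    [TopologicalSpace A] [DiscreteTopology A]
    (σ : A → List B) (hσ : NonErasing σ) (x : ℤ → A)
    (X : Set (ℤ → A)) (hX : X = closure {z : ℤ → A | ∃ n : ℤ, z = fun i => x (i + n)})
    (hmin : ∀ Y : Set (ℤ → A), Y ⊆ X → IsClosed Y → ShiftInvariant Y → Y = ∅ ∨ Y = X)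
    (hinj : ∀ a b : A, σ a = σ b → a = b)
    (hmosse : MosseRec σ x) :
    RecIn σ X := by
  intro y k1 k2 x1 x2 hx1 hx2 hc1 hc2
  rw [hX] at hx1 hx2
  obtain ⟨R, hRall⟩ := hmosse
  obtain ⟨y0, hy0⟩ := exists_substPt σ hσ x
  have hR := hRall y0 hy0
  have h12 : ∀ ℓ1 : ℤ, ∃ ℓ2 : ℤ, cut σ x1 ℓ1 - k1 = cut σ x2 ℓ2 - k2 := fun ℓ1 =>
    main_step σ hσ x y0 hy0 R hR x1 x2 hx1 hx2 y k1 k2 hc1.1 hc2.1 ℓ1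
  have h21 : ∀ ℓ2 : ℤ, ∃ ℓ1 : ℤ, cut σ x2 ℓ2 - k2 = cut σ x1 ℓ1 - k1 := fun ℓ2 =>
    main_step σ hσ x y0 hy0 R hR x2 x1 hx2 hx1 y k2 k1 hc2.1 hc1.1 ℓ2
  have hsync := sync σ hσ x1 x2 k1 k2 h12 h21 hc1.2.1 hc1.2.2 hc2.2.1 hc2.2.2
  have hk : k1 = k2 := by
    have h0 := hsync 0
    rw [cut_zero, cut_zero] at h0
    omega
  refine ⟨hk, funext fun ℓ => ?_⟩
  have hcuteq : ∀ ℓ' : ℤ, cut σ x1 ℓ' = cut σ x2 ℓ' := fun ℓ' => by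
    have := hsync ℓ'
    omega
  have hlen : (σ (x1 ℓ)).length = (σ (x2 ℓ)).length := by
    have h1 := cut_succ σ x1 ℓ
    have h2 := cut_succ σ x2 ℓ
    have e1 := hcuteq ℓ
    have e2 := hcuteq (ℓ + 1)
    omega
  apply hinj
  apply List.ext_getElem hlen
  intro j hj1 hj2
  have e1 : y (cut σ x1 ℓ + (j : ℤ) - k1) = (σ (x1 ℓ)).get ⟨j, hj1⟩ := hc1.1 ℓ j hj1
  have e2 : y (cut σ x2 ℓ + (j : ℤ) - k2) = (σ (x2 ℓ)).get ⟨j, hj2⟩ := hc2.1 ℓ j hj2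
  have harg : cut σ x1 ℓ + (j : ℤ) - k1 = cut σ x2 ℓ + (j : ℤ) - k2 := by
    have := hcuteq ℓ
    omega
  rw [harg] at e1
  rw [e2] at e1
  simpa [List.get_eq_getElem] using e1.symm
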